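/- Let U ⊆ [0, π) with 0 ∈ U, |U| ≥ 3, fix distinct α, β ∈ U \ {0}, and for γ ∈ U \ {0} let p(γ) be the γ-projection of ⟦0,1⟧. Then for every γ ∈ U \ {0}, p(γ)·M_ℝ ⊆ M_ℝ, where M_ℝ is the real part of the origami set M(U). -/

import Mathlib

open Real Complex Set

/-- The `θ`-projection of `z`: the unique real `x` with `z ∈ x + ℝ·exp(iθ)`
(for `θ ∈ (0,π)`); explicitly `x = Re z − Im z · cos θ / sin θ`. -/
noncomputable def proj (θ : ℝ) (z : ℂ) : ℝ := z.re - z.im * Real.cos θ / Real.sin θ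

/-- `inter α β r s` is the (unique, for distinct `α β ∈ (0,π)`) complex number
with `α`-projection `r` and `β`-projection `s`, i.e. `⟦r,s⟧_{α,β}`. -/
noncomputable def inter (α β r s : ℝ) : ℂ :=
  Classical.epsilon fun z : ℂ => proj α z = r ∧ proj β z = s

/-- The line through `z` with slope (angle) `θ`. -/
def lineThru (z : ℂ) (θ : ℝ) : Set ℂ := {w | ∃ t : ℝ, w = z + t * Complex.exp (θ * Complex.I)}

/-- The recursively defined stages of the origami set. -/
def origamiStep (U : Set ℝ) : ℕ → Set ℂ
  | 0 => {0, 1}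
  | k + 1 => {w | ∃ z ∈ origamiStep U k, ∃ z' ∈ origamiStep U k,
      ∃ γ ∈ U, ∃ γ' ∈ U, γ ≠ γ' ∧ w ∈ lineThru z γ ∧ w ∈ lineThru z' γ'}

/-- The origami set `M(U)`. -/
def origami (U : Set ℝ) : Set ℂ := ⋃ k, origamiStep U k

/-- The real part `M_ℝ = M(U) ∩ ℝ`, viewed as a set of reals. -/
def origamiR (U : Set ℝ) : Set ℝ := {x : ℝ | (x : ℂ) ∈ origami U}

lemma proj_real_mul (θ x : ℝ) (z : ℂ) : proj θ ((x:ℂ) * z) = x * proj θ z := by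
  simp [proj, Complex.mul_re, Complex.mul_im]
  ring

lemma mem_lineThru_of_proj {θ : ℝ} (hs : Real.sin θ ≠ 0) {z : ℂ} {p : ℝ}
    (h : proj θ z = p) : z ∈ lineThru (p:ℂ) θ := by
  refine ⟨z.im / Real.sin θ, ?_⟩
  apply Complex.ext
  · simp only [Complex.add_re, Complex.ofReal_re, Complex.mul_re, Complex.ofReal_im,
      Complex.exp_ofReal_mul_I_re, Complex.exp_ofReal_mul_I_im]
    rw [← h]
    simp only [proj]
    field_simp
    ring
  · simp only [Complex.add_im, Complex.ofReal_im, Complex.mul_im, Complex.ofReal_re,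
      Complex.exp_ofReal_mul_I_re, Complex.exp_ofReal_mul_I_im]
    field_simp
    ring

lemma lineThru_symm {z w : ℂ} {θ : ℝ} (h : z ∈ lineThru w θ) : w ∈ lineThru z θ := by
  obtain ⟨t, ht⟩ := h
  exact ⟨-t, by rw [ht]; push_cast; ring⟩

lemma inter_spec {α β : ℝ} (hα : α ∈ Set.Ioo 0 π) (hβ : β ∈ Set.Ioo 0 π) (hαβ : α ≠ β) :
    proj α (inter α β 0 1) = 0 ∧ proj β (inter α β 0 1) = 1 := by
  apply Classical.epsilon_spec (p := fun z : ℂ => proj α z = 0 ∧ proj β z = 1)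
  have hsα := Real.sin_pos_of_pos_of_lt_pi hα.1 hα.2
  have hsβ := Real.sin_pos_of_pos_of_lt_pi hβ.1 hβ.2
  have hsd : Real.sin (β - α) ≠ 0 := by
    intro h
    rw [Real.sin_eq_zero_iff_of_lt_of_lt (by linarith [hα.2, hβ.1]) (by linarith [hα.1, hβ.2])] at h
    exact hαβ (by linarith)
  rw [Real.sin_sub] at hsd
  set cα := Real.cos α / Real.sin α
  set cβ := Real.cos β / Real.sin β
  have hd : cα - cβ ≠ 0 := by
    intro h
    apply hsd
    have : cα = cβ := by linarith
    have h2 : Real.cos α * Real.sin β = Real.cos β * Real.sin α := by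
      have := this
      have h3 : Real.cos α / Real.sin α = Real.cos β / Real.sin β := this
      rw [div_eq_div_iff hsα.ne' hsβ.ne'] at h3
      linarith
    linarith
  have key : (1/(cα - cβ)) * cα - (1/(cα - cβ)) * cβ = 1 := by
    rw [← mul_sub]
    field_simp
  refine ⟨⟨(1/(cα - cβ)) * cα, 1/(cα - cβ)⟩, ?_, ?_⟩
  · show (1/(cα - cβ)) * cα - (1/(cα - cβ)) * Real.cos α / Real.sin α = 0
    rw [mul_div_assoc]
    ring
  · show (1/(cα - cβ)) * cα - (1/(cα - cβ)) * Real.cos β / Real.sin β = 1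
    rw [mul_div_assoc]
    exact key

lemma origamiStep_mono {U : Set ℝ} {γ γ' : ℝ} (hγ : γ ∈ U) (hγ' : γ' ∈ U) (hne : γ ≠ γ')
    {k l : ℕ} (hkl : k ≤ l) : origamiStep U k ⊆ origamiStep U l := by
  induction l with
  | zero => simp_all
  | succ n ih =>
    rcases Nat.lt_or_ge k (n+1) with h | h
    · intro z hz
      have hz' : z ∈ origamiStep U n := ih (Nat.lt_succ_iff.mp h) hz
      exact ⟨z, hz', z, hz', γ, hγ, γ', hγ', hne, ⟨0, by simp⟩, ⟨0, by simp⟩⟩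
    · have : k = n + 1 := le_antisymm hkl h
      subst this; exact fun z hz => hz

lemma origami_inter {U : Set ℝ} {γ γ' : ℝ} (hγ : γ ∈ U) (hγ' : γ' ∈ U) (hne : γ ≠ γ')
    {z z' w : ℂ} (hz : z ∈ origami U) (hz' : z' ∈ origami U)
    (h1 : w ∈ lineThru z γ) (h2 : w ∈ lineThru z' γ') : w ∈ origami U := by
  obtain ⟨_, ⟨k, rfl⟩, hk⟩ := hz
  obtain ⟨_, ⟨l, rfl⟩, hl⟩ := hz'
  refine Set.mem_iUnion.2 ⟨max k l + 1, ?_⟩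
  exact ⟨z, origamiStep_mono hγ hγ' hne (le_max_left k l) hk,
    z', origamiStep_mono hγ hγ' hne (le_max_right k l) hl, γ, hγ, γ', hγ', hne, h1, h2⟩

theorem p_mul_mem (U : Set ℝ) (hU : U ⊆ Set.Ico 0 Real.pi) (h0 : (0 : ℝ) ∈ U)
    (hcard : 3 ≤ U.encard) (α β : ℝ) (hα : α ∈ U) (hβ : β ∈ U)
    (hα0 : α ≠ 0) (hβ0 : β ≠ 0) (hαβ : α ≠ β) :
    ∀ γ ∈ U \ {0}, ∀ x ∈ origamiR U, proj γ (inter α β 0 1) * x ∈ origamiR U := by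
  intro γ hγ x hx
  obtain ⟨hγU, hγ0⟩ := hγ
  have hγ0 : γ ≠ 0 := hγ0
  have hαI : α ∈ Set.Ioo 0 π := ⟨lt_of_le_of_ne (hU hα).1 (Ne.symm hα0), (hU hα).2⟩
  have hβI : β ∈ Set.Ioo 0 π := ⟨lt_of_le_of_ne (hU hβ).1 (Ne.symm hβ0), (hU hβ).2⟩
  have hγI : γ ∈ Set.Ioo 0 π := ⟨lt_of_le_of_ne (hU hγU).1 (Ne.symm hγ0), (hU hγU).2⟩
  have hsα := (Real.sin_pos_of_pos_of_lt_pi hαI.1 hαI.2).ne'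
  have hsβ := (Real.sin_pos_of_pos_of_lt_pi hβI.1 hβI.2).ne'
  have hsγ := (Real.sin_pos_of_pos_of_lt_pi hγI.1 hγI.2).ne'
  obtain ⟨pα, pβ⟩ := inter_spec hαI hβI hαβ
  set z₁ := inter α β 0 1 with hz₁
  set w : ℂ := (x:ℂ) * z₁ with hw
  have pwα : proj α w = 0 := by rw [hw, proj_real_mul, pα, mul_zero]
  have pwβ : proj β w = x := by rw [hw, proj_real_mul, pβ, mul_one]
  have pwγ : proj γ w = x * proj γ z₁ := by rw [hw, proj_real_mul]
  have h0mem : (0:ℂ) ∈ origami U := Set.mem_iUnion.2 ⟨0, Or.inl rfl⟩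
  have hxmem : (x:ℂ) ∈ origami U := hx
  have hwmem : w ∈ origami U := by
    refine origami_inter hα hβ hαβ h0mem hxmem ?_ ?_
    · have := mem_lineThru_of_proj hsα pwα
      simpa using this
    · exact mem_lineThru_of_proj hsβ pwβ
  have hpmem : ((x * proj γ z₁ : ℝ) : ℂ) ∈ origami U := by
    refine origami_inter hγU h0 hγ0 hwmem h0mem ?_ ?_
    · exact lineThru_symm (mem_lineThru_of_proj hsγ pwγ)
    · exact ⟨x * proj γ z₁, by simp⟩
  show ((proj γ z₁ * x : ℝ) : ℂ) ∈ origami U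
  rw [mul_comm]
  exact hpmem
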